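/- Let V and W be finite-dimensional real inner product spaces, let J be a compatible complex structure on V, and let (e_1, …, e_n, η_1, …, η_d) be an orthonormal basis of V × W. Writing x¹ for the V-component of x ∈ V × W, one has Σ_{j=1}^{n} Σ_{k=1}^{d} ( ⟨e_j¹, η_k¹⟩² − ⟨e_j¹, J(η_k¹)⟩² ) = Σ_{i=1}^{n} Σ_{j=1}^{n} ( ⟨J(e_j¹), e_i¹⟩² − ⟨e_j¹, e_i¹⟩² ). (This is the tangent-vector identity (MAIN2) in the paper's Lemma 3.1.) -/

import Mathlib

open scoped RealInnerProductSpace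

/-- Tangent-vector identity (MAIN2) in the paper's Lemma 3.1. -/
theorem stmt_1 {V W : Type*} [NormedAddCommGroup V] [InnerProductSpace ℝ V]
    [FiniteDimensional ℝ V] [NormedAddCommGroup W] [InnerProductSpace ℝ W]
    [FiniteDimensional ℝ W] (J : V →ₗ[ℝ] V)
    (hJiso : ∀ x y : V, ⟪J x, J y⟫ = ⟪x, y⟫)
    (hJsq : ∀ x : V, J (J x) = -x)
    {n d : ℕ} (b : OrthonormalBasis (Fin n ⊕ Fin d) ℝ (WithLp 2 (V × W))) :
    ∑ j : Fin n, ∑ k : Fin d,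
      (⟪(b (Sum.inl j)).fst, (b (Sum.inr k)).fst⟫ ^ 2
        - ⟪(b (Sum.inl j)).fst, J ((b (Sum.inr k)).fst)⟫ ^ 2)
      = ∑ i : Fin n, ∑ j : Fin n,
        (⟪J ((b (Sum.inl j)).fst), (b (Sum.inl i)).fst⟫ ^ 2
          - ⟪(b (Sum.inl j)).fst, (b (Sum.inl i)).fst⟫ ^ 2) := by
  have hanti : ∀ x y : V, ⟪x, J y⟫ = -⟪J x, y⟫ := by
    intro x y
    have h := hJiso x (J y)
    rw [hJsq y, inner_neg_right] at h
    linarith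
  -- Parseval-type identity for the first components
  have key : ∀ u : V, ∑ a : Fin n ⊕ Fin d, ⟪u, (b a).fst⟫ ^ 2 = ⟪u, u⟫ := by
    intro u
    have h := b.sum_inner_mul_inner ((WithLp.equiv 2 (V × W)).symm (u, 0))
      ((WithLp.equiv 2 (V × W)).symm (u, 0))
    simp only [WithLp.prod_inner_apply, WithLp.equiv_symm_apply, WithLp.ofLp_toLp, WithLp.ofLp_fst, WithLp.ofLp_snd,
      inner_zero_left, inner_zero_right, add_zero, zero_add] at h
    calc ∑ a : Fin n ⊕ Fin d, ⟪u, (b a).fst⟫ ^ 2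
        = ∑ a : Fin n ⊕ Fin d, ⟪u, (b a).fst⟫ * ⟪(b a).fst, u⟫ := by
          refine Finset.sum_congr rfl fun a _ => ?_
          rw [real_inner_comm u]; ring
      _ = ⟪u, u⟫ := h
  have main : ∀ u : V,
      ∑ k : Fin d, (⟪u, (b (Sum.inr k)).fst⟫ ^ 2 - ⟪u, J ((b (Sum.inr k)).fst)⟫ ^ 2)
        = ∑ i : Fin n, (⟪J u, (b (Sum.inl i)).fst⟫ ^ 2 - ⟪u, (b (Sum.inl i)).fst⟫ ^ 2) := by
    intro u
    have h1 := key u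
    have h2 := key (J u)
    rw [hJiso u u] at h2
    rw [Fintype.sum_sum_type] at h1 h2
    have h3 : ∀ k : Fin d, ⟪u, J ((b (Sum.inr k)).fst)⟫ ^ 2
        = ⟪J u, (b (Sum.inr k)).fst⟫ ^ 2 := by
      intro k; rw [hanti]; ring
    simp only [h3]
    rw [Finset.sum_sub_distrib, Finset.sum_sub_distrib]
    linarith
  calc ∑ j : Fin n, ∑ k : Fin d,
      (⟪(b (Sum.inl j)).fst, (b (Sum.inr k)).fst⟫ ^ 2
        - ⟪(b (Sum.inl j)).fst, J ((b (Sum.inr k)).fst)⟫ ^ 2)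
      = ∑ j : Fin n, ∑ i : Fin n,
        (⟪J ((b (Sum.inl j)).fst), (b (Sum.inl i)).fst⟫ ^ 2
          - ⟪(b (Sum.inl j)).fst, (b (Sum.inl i)).fst⟫ ^ 2) :=
        Finset.sum_congr rfl fun j _ => main _
    _ = _ := Finset.sum_comm
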